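/- Pathwise superhedging inequality H^I: for any continuous path (S_t)_{t∈[0,T]} with S_0 ∈ (b̲, b̄), any K > b̲, the indicator that both barriers are hit, 1{sup_{t≤T} S_t ≥ b̄ and inf_{t≤T} S_t ≤ b̲}, is at most (K−S_T)^+/(K−b̲) + (S_T−b̲)/(K−b̲)·1{inf_{t≤T} S_t ≤ b̲}. -/

import Mathlib

open Set
open scoped Classical

/-- Pathwise superhedging inequality H^I for the double touch option. -/
theorem stmt2 (T lb ub K : ℝ) (S : ℝ → ℝ)
    (hT : 0 < T) (hcont : ContinuousOn S (Set.Icc 0 T))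
    (hlb : 0 < lb) (h1 : lb < S 0) (h2 : S 0 < ub)
    (hK : lb < K) :
    (if ub ≤ sSup (S '' Set.Icc 0 T) ∧ sInf (S '' Set.Icc 0 T) ≤ lb
      then (1 : ℝ) else 0)
      ≤ max (K - S T) 0 / (K - lb)
        + (S T - lb) / (K - lb) *
          (if sInf (S '' Set.Icc 0 T) ≤ lb then (1 : ℝ) else 0) := by
  have hKlb : (0:ℝ) < K - lb := by linarith
  by_cases h : sInf (S '' Set.Icc 0 T) ≤ lb
  · rw [if_pos h, mul_one]
    have hsum : K - lb ≤ max (K - S T) 0 + (S T - lb) := by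
      rcases le_total (S T) K with hc | hc
      · rw [max_eq_left (by linarith)]; linarith
      · have := le_max_right (K - S T) (0:ℝ); linarith
    have hr : (1:ℝ) ≤ max (K - S T) 0 / (K - lb) + (S T - lb) / (K - lb) := by
      rw [← add_div, le_div_iff₀ hKlb]; linarith
    split_ifs with h2
    · exact hr
    · linarith
  · have hnot : ¬(ub ≤ sSup (S '' Set.Icc 0 T) ∧ sInf (S '' Set.Icc 0 T) ≤ lb) :=
      fun hc => h hc.2
    rw [if_neg hnot, if_neg h, mul_zero, add_zero]
    exact div_nonneg (le_max_right _ _) hKlb.le
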